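/- Let D_j = {2^{j−1}(2s−1) : s ∈ ℕ} for j ∈ ℕ, and let I be the ideal of all subsets of ℕ that intersect only finitely many of the D_j. Define the real sequence x_n = 1/j^j for n ∈ D_j. Then for every r ≥ 0: (a) the interval [−r, r] is contained in the rough I-limit set of degree r of (x_n), and (b) −r is not a rough I*-limit of degree r of (x_n). -/

import Mathlib

/-- `I` is an ideal of subsets of ℕ: closed under finite unions and subsets. -/
def IsIdeal (I : Set (Set ℕ)) : Prop :=
  (∀ A B : Set ℕ, A ∈ I → B ∈ I → A ∪ B ∈ I) ∧
  (∀ A B : Set ℕ, A ∈ I → B ⊆ A → B ∈ I)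

/-- A nontrivial admissible ideal: an ideal containing all singletons, with ℕ ∉ I. -/
def IsAdmissibleIdeal (I : Set (Set ℕ)) : Prop :=
  IsIdeal I ∧ (∀ n : ℕ, ({n} : Set ℕ) ∈ I) ∧ (Set.univ : Set ℕ) ∉ I

/-- The subsequence of `x` over `M` rough converges to `l` of degree `r`:
for each ε > 0, ‖x m − l‖ < r + ε for all but finitely many m ∈ M. -/
def RoughConvAlong {X : Type*} [NormedAddCommGroup X]
    (M : Set ℕ) (x : ℕ → X) (r : ℝ) (l : X) : Prop :=
  ∀ ε > (0:ℝ), {m ∈ M | r + ε ≤ ‖x m - l‖}.Finite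

/-- Rough I-convergence of degree r to l. -/
def RoughIConv (I : Set (Set ℕ)) {X : Type*} [NormedAddCommGroup X]
    (x : ℕ → X) (r : ℝ) (l : X) : Prop :=
  ∀ ε > (0:ℝ), {n : ℕ | r + ε ≤ ‖x n - l‖} ∈ I

/-- Rough I*-convergence of degree r to l. -/
def RoughIStarConv (I : Set (Set ℕ)) {X : Type*} [NormedAddCommGroup X]
    (x : ℕ → X) (r : ℝ) (l : X) : Prop :=
  ∃ M : Set ℕ, Mᶜ ∈ I ∧ RoughConvAlong M x r l

/-- The trace ideal K|M = {A ∩ M : A ∈ K}. -/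
def traceIdeal (K : Set (Set ℕ)) (M : Set ℕ) : Set (Set ℕ) :=
  {A | ∃ B ∈ K, A = B ∩ M}

/-- Rough I^K-convergence of degree r to l: there is M with Mᶜ ∈ I such that the
set of indices of the subsequence over M lying outside the (r+ε)-ball belongs to K|M. -/
def RoughIKConv (I K : Set (Set ℕ)) {X : Type*} [NormedAddCommGroup X]
    (x : ℕ → X) (r : ℝ) (l : X) : Prop :=
  ∃ M : Set ℕ, Mᶜ ∈ I ∧
    ∀ ε > (0:ℝ), {m ∈ M | r + ε ≤ ‖x m - l‖} ∈ traceIdeal K M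

/-- The condition (AP) for an ideal I. -/
def APcond (I : Set (Set ℕ)) : Prop :=
  ∀ A : ℕ → Set ℕ, (∀ j, A j ∈ I) → (Pairwise (Function.onFun Disjoint A)) →
    ∃ B : ℕ → Set ℕ, (∀ j, B j ∈ I) ∧ (∀ j, (symmDiff (A j) (B j)).Finite) ∧
      (⋃ j, B j) ∈ I

/-- The condition AP(I,K). -/
def APIK (I K : Set (Set ℕ)) : Prop :=
  ∀ A : ℕ → Set ℕ, (∀ j, A j ∈ I) → (Pairwise (Function.onFun Disjoint A)) →
    ∃ B : ℕ → Set ℕ, (∀ j, B j ∈ I) ∧ (∀ j, symmDiff (A j) (B j) ∈ K) ∧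
      (⋃ j, B j) ∈ I

/-- `D j` (paper's `D_{j+1}`): naturals of the form `2^j * (odd)`. -/
def Dset (j : ℕ) : Set ℕ := {n | ∃ s : ℕ, n = 2 ^ j * (2 * s + 1)}

/-- The ideal `I` of the example: sets meeting only finitely many of the `Dset j`. -/
def idealI : Set (Set ℕ) := {S | {j : ℕ | (S ∩ Dset j).Nonempty}.Finite}

/-- The sequence of the example: `x n = 1/j^j` when `n ∈ D_j` (paper indexing),
i.e. `x n = 1/(ν₂(n)+1)^(ν₂(n)+1)`. -/
noncomputable def xseq (n : ℕ) : ℝ :=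
  1 / ((padicValNat 2 n + 1 : ℝ) ^ (padicValNat 2 n + 1))


lemma dval {j n : ℕ} (h : n ∈ Dset j) : padicValNat 2 n = j := by
  obtain ⟨s, rfl⟩ := h
  have h2 : ¬ (2 ∣ (2*s+1)) := by omega
  rw [padicValNat.mul (by positivity) (by omega), padicValNat.prime_pow,
    padicValNat.eq_zero_of_not_dvd h2]
  omega

lemma dinf (j : ℕ) : (Dset j).Infinite := by
  apply Set.infinite_of_injective_forall_mem (f := fun s : ℕ => 2^j*(2*s+1))
  · intro a b hab
    have hp : 0 < 2^j := Nat.pow_pos (by norm_num)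
    simp only at hab
    have := Nat.eq_of_mul_eq_mul_left hp hab
    omega
  · exact fun s => ⟨s, rfl⟩

lemma xval {j n : ℕ} (h : n ∈ Dset j) :
    xseq n = 1 / ((j+1:ℝ)^(j+1)) := by
  rw [xseq, dval h]

lemma xpos (n : ℕ) : 0 < xseq n := by
  rw [xseq]; positivity

theorem stmt19 :
    IsAdmissibleIdeal idealI ∧
    ∀ r : ℝ, 0 ≤ r →
      (∀ l ∈ Set.Icc (-r) r, RoughIConv idealI xseq r l) ∧
      ¬ RoughIStarConv idealI xseq r (-r) := by
  constructor
  · refine ⟨⟨fun A B hA hB => ?_, fun A B hA hBA => ?_⟩, fun n => ?_, ?_⟩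
    · apply (hA.union hB).subset
      rintro j ⟨m, hm, hd⟩
      rcases hm with hm | hm
      exacts [Or.inl ⟨m, hm, hd⟩, Or.inr ⟨m, hm, hd⟩]
    · exact hA.subset fun j ⟨m, hm, hd⟩ => ⟨m, hBA hm, hd⟩
    · apply (Set.finite_singleton (padicValNat 2 n)).subset
      rintro j ⟨m, hm, hd⟩
      rcases hm with rfl
      exact (dval hd).symm
    · intro h
      apply h.infinite_compl.nonempty.elim
      intro j hj
      exact hj ⟨2^j, Set.mem_univ _, ⟨0, by ring⟩⟩
  · intro r hr
    constructor
    · rintro l ⟨hl1, hl2⟩ ε hε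
      apply (Set.finite_Iic ⌈1/ε⌉₊).subset
      rintro j ⟨n, hn, hd⟩
      simp only [Set.mem_setOf_eq] at hn
      have hxl : ‖xseq n - l‖ ≤ xseq n + r := by
        calc ‖xseq n - l‖ ≤ ‖xseq n‖ + ‖l‖ := norm_sub_le _ _
        _ ≤ xseq n + r := by
            rw [Real.norm_eq_abs, Real.norm_eq_abs, abs_of_pos (xpos n)]
            gcongr
            exact abs_le.mpr ⟨hl1, hl2⟩
      have hεx : ε ≤ xseq n := by linarith
      rw [xval hd] at hεx
      have hp : (0:ℝ) < (j+1:ℝ)^(j+1) := by positivity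
      have h1 : (j+1:ℝ)^(j+1) ≤ 1/ε := by
        rw [le_div_iff₀ hε]
        have := (le_div_iff₀ hp).mp hεx
        linarith
      have h2 : (j:ℝ)+1 ≤ (j+1:ℝ)^(j+1) :=
        le_self_pow₀ (by linarith [Nat.cast_nonneg (α := ℝ) j]) (by omega)
      have h3 : (j:ℝ) ≤ 1/ε := by linarith
      have : (j:ℝ) ≤ (⌈1/ε⌉₊ : ℝ) := le_trans h3 (Nat.le_ceil _)
      exact_mod_cast Set.mem_Iic.mpr (Nat.cast_le.mp this)
    · rintro ⟨M, hM, hconv⟩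
      obtain ⟨j, hj⟩ := hM.infinite_compl.nonempty
      have hDM : Dset j ⊆ M := by
        intro n hn
        by_contra hnM
        exact hj ⟨n, hnM, hn⟩
      set ε := 1 / ((j+1:ℝ)^(j+1)) with hεdef
      have hεpos : (0:ℝ) < ε := by positivity
      have hfin := hconv ε hεpos
      apply (dinf j)
      apply hfin.subset
      intro n hn
      refine ⟨hDM hn, ?_⟩
      have : ‖xseq n - (-r)‖ = xseq n + r := by
        rw [sub_neg_eq_add, Real.norm_eq_abs, abs_of_pos (by linarith [xpos n])]
      rw [this, xval hn]
      linarith
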